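/- Let A_i → A (real d×d matrices) and b_i → b (vectors in ℝ^d) as i → ∞. Then sup_{(θ,x) ∈ B_θ × B_x} |ψ_{A_i,b_i}(θ,x) − ψ_{A,b}(θ,x)| → 0 as i → ∞, and for every ε > 0 there exists i₀ such that for all i ≥ i₀ the saddle set S_{A_i,b_i} is contained in the ε-neighborhood of the saddle set S_{A,b} (with respect to the Euclidean distance on ℝ^d × ℝ^d). -/

import Mathlib

open Matrix

/-- If `A_i → A` and `b_i → b`, then `ψ_{A_i,b_i} → ψ_{A,b}` uniformly on
`B_θ × B_x`, and for every `ε > 0` the saddle sets `S_{A_i,b_i}` are eventually contained in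
the `ε`-neighborhood (w.r.t. the Euclidean distance on `ℝ^d × ℝ^d`) of `S_{A,b}`. -/
theorem stmt_19
    (n d : ℕ) (hn : 0 < n) (hd : 0 < d)
    (Φ : Matrix (Fin n) (Fin d) ℝ) (hΦ : Φ ≠ 0)
    (ξ : Fin n → ℝ) (hξ : ∀ i, 0 < ξ i)
    (Ξ : Matrix (Fin n) (Fin n) ℝ) (hΞ : Ξ = Matrix.diagonal ξ)
    (C : Matrix (Fin d) (Fin d) ℝ) (hC : C = Φᵀ * Ξ * Φ)
    (p : (Fin d → ℝ) → ℝ)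
    (hp_conv : ConvexOn ℝ Set.univ p) (hp_diff : Differentiable ℝ p)
    (Bθ Bx : Set (Fin d → ℝ))
    (hBθ_ne : Bθ.Nonempty) (hBθ_cpt : IsCompact Bθ) (hBθ_conv : Convex ℝ Bθ)
    (hBx_ne : Bx.Nonempty) (hBx_cpt : IsCompact Bx) (hBx_conv : Convex ℝ Bx)
    -- `ψ_{A',b'}(θ,x) = xᵀ(A'θ + b') − ½xᵀCx + p(θ)`
    (ψ : Matrix (Fin d) (Fin d) ℝ → (Fin d → ℝ) → (Fin d → ℝ) → (Fin d → ℝ) → ℝ)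
    (hψ : ∀ (A' : Matrix (Fin d) (Fin d) ℝ) (b' θ x : Fin d → ℝ),
      ψ A' b' θ x = x ⬝ᵥ (A'.mulVec θ + b') - (1 / 2) * (x ⬝ᵥ C.mulVec x) + p θ)
    -- `S_{A',b'}` is the set of saddle points whose second component lies in `span{φ(S)}`
    (Sdl : Matrix (Fin d) (Fin d) ℝ → (Fin d → ℝ) → Set ((Fin d → ℝ) × (Fin d → ℝ)))
    (hSdl : ∀ (A' : Matrix (Fin d) (Fin d) ℝ) (b' : Fin d → ℝ),
      Sdl A' b' = {q : (Fin d → ℝ) × (Fin d → ℝ) |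
        q.1 ∈ Bθ ∧ q.2 ∈ Bx ∧
        q.2 ∈ Submodule.span ℝ (Set.range (fun i : Fin n => Φ i)) ∧
        (∀ θ ∈ Bθ, ψ A' b' q.1 q.2 ≤ ψ A' b' θ q.2) ∧
        (∀ x ∈ Bx, ψ A' b' q.1 x ≤ ψ A' b' q.1 q.2)})
    (A : ℕ → Matrix (Fin d) (Fin d) ℝ) (b : ℕ → Fin d → ℝ)
    (Alim : Matrix (Fin d) (Fin d) ℝ) (blim : Fin d → ℝ)
    (hA : Filter.Tendsto A Filter.atTop (nhds Alim))
    (hb : Filter.Tendsto b Filter.atTop (nhds blim)) :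
    TendstoUniformlyOn
      (fun (i : ℕ) (q : (Fin d → ℝ) × (Fin d → ℝ)) => ψ (A i) (b i) q.1 q.2)
      (fun q => ψ Alim blim q.1 q.2) Filter.atTop (Bθ ×ˢ Bx) ∧
    (∀ ε : ℝ, 0 < ε → ∃ i₀ : ℕ, ∀ i ≥ i₀, ∀ q ∈ Sdl (A i) (b i),
      ∃ q' ∈ Sdl Alim blim,
        Real.sqrt ((q.1 - q'.1) ⬝ᵥ (q.1 - q'.1) + (q.2 - q'.2) ⬝ᵥ (q.2 - q'.2)) < ε) := by
  classical
  -- the joint function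
  set g : (Matrix (Fin d) (Fin d) ℝ × (Fin d → ℝ)) × ((Fin d → ℝ) × (Fin d → ℝ)) → ℝ :=
    fun z => z.2.2 ⬝ᵥ (z.1.1.mulVec z.2.1 + z.1.2) - (1 / 2) * (z.2.2 ⬝ᵥ C.mulVec z.2.2)
      + p z.2.1 with hg
  have hcontg : Continuous g := by
    apply Continuous.add
    · apply Continuous.sub
      · exact (continuous_snd.comp continuous_snd).dotProduct
          (((continuous_fst.comp continuous_fst).matrix_mulVec
            (continuous_fst.comp continuous_snd)).add
            (continuous_snd.comp continuous_fst))
      · exact continuous_const.mul ((continuous_snd.comp continuous_snd).dotProduct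
          (continuous_const.matrix_mulVec (continuous_snd.comp continuous_snd)))
    · exact hp_diff.continuous.comp (continuous_fst.comp continuous_snd)
  have hψg : ∀ (A' : Matrix (Fin d) (Fin d) ℝ) (b' θ x : Fin d → ℝ),
      ψ A' b' θ x = g ((A', b'), (θ, x)) := fun A' b' θ x => hψ A' b' θ x
  have hAB : Filter.Tendsto (fun i => (A i, b i)) Filter.atTop (nhds (Alim, blim)) :=
    hA.prodMk_nhds hb
  have hK : IsCompact (Bθ ×ˢ Bx) := hBθ_cpt.prod hBx_cpt
  constructor
  · -- uniform convergence
    haveI : CompactSpace ↥(Bθ ×ˢ Bx) := isCompact_iff_compactSpace.mp hK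
    rw [tendstoUniformlyOn_iff_tendstoUniformly_comp_coe]
    have hG : Continuous (fun z : (Matrix (Fin d) (Fin d) ℝ × (Fin d → ℝ)) × ↥(Bθ ×ˢ Bx) =>
        g (z.1, (z.2 : ((Fin d → ℝ) × (Fin d → ℝ))))) :=
      hcontg.comp (continuous_fst.prodMk (continuous_subtype_val.comp continuous_snd))
    let G : C((Matrix (Fin d) (Fin d) ℝ × (Fin d → ℝ)) × ↥(Bθ ×ˢ Bx), ℝ) := ⟨_, hG⟩
    have htd : Filter.Tendsto (fun i => G.curry (A i, b i)) Filter.atTop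
        (nhds (G.curry (Alim, blim))) :=
      (G.curry.continuous.tendsto _).comp hAB
    have := ContinuousMap.tendsto_iff_tendstoUniformly.mp htd
    simp only [ContinuousMap.curry_apply, ContinuousMap.coe_mk, G] at this
    convert this using 2 with i
    · funext a; exact hψg _ _ _ _
    · funext a; exact hψg _ _ _ _
  · -- saddle set upper semicontinuity
    by_contra hcon
    push_neg at hcon
    obtain ⟨ε, hε, hbad⟩ := hcon
    have hfreq : ∃ᶠ i in Filter.atTop, ∃ q ∈ Sdl (A i) (b i), ∀ q' ∈ Sdl Alim blim,
        ε ≤ Real.sqrt ((q.1 - q'.1) ⬝ᵥ (q.1 - q'.1) + (q.2 - q'.2) ⬝ᵥ (q.2 - q'.2)) := by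
      rw [Filter.frequently_atTop]
      intro a
      obtain ⟨i, hi, q, hq1, hq2⟩ := hbad a
      exact ⟨i, hi, q, hq1, hq2⟩
    obtain ⟨i, hi_mono, hiP⟩ := Filter.extraction_of_frequently_atTop hfreq
    choose q hqS hqfar using hiP
    have hqS' : ∀ k, (q k).1 ∈ Bθ ∧ (q k).2 ∈ Bx ∧
        (q k).2 ∈ Submodule.span ℝ (Set.range (fun j : Fin n => Φ j)) ∧
        (∀ θ ∈ Bθ, ψ (A (i k)) (b (i k)) (q k).1 (q k).2 ≤ ψ (A (i k)) (b (i k)) θ (q k).2) ∧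
        (∀ x ∈ Bx, ψ (A (i k)) (b (i k)) (q k).1 x ≤ ψ (A (i k)) (b (i k)) (q k).1 (q k).2) := by
      intro k
      have := hqS k
      rwa [hSdl, Set.mem_setOf_eq] at this
    have hqmem : ∀ k, q k ∈ Bθ ×ˢ Bx := fun k => ⟨(hqS' k).1, (hqS' k).2.1⟩
    obtain ⟨q', hq'mem, φ, hφ, hconv⟩ := hK.tendsto_subseq hqmem
    have hφt : Filter.Tendsto (fun m => i (φ m)) Filter.atTop Filter.atTop :=
      (hi_mono.comp hφ).tendsto_atTop
    have hABφ : Filter.Tendsto (fun m => (A (i (φ m)), b (i (φ m)))) Filter.atTop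
        (nhds (Alim, blim)) := hAB.comp hφt
    have hconv2 : Filter.Tendsto (fun m => (q (φ m)).2) Filter.atTop (nhds q'.2) :=
      (continuous_snd.tendsto q').comp hconv
    have hconv1 : Filter.Tendsto (fun m => (q (φ m)).1) Filter.atTop (nhds q'.1) :=
      (continuous_fst.tendsto q').comp hconv
    -- q' is a saddle point of the limit problem
    have hq'Sdl : q' ∈ Sdl Alim blim := by
      rw [hSdl, Set.mem_setOf_eq]
      refine ⟨hq'mem.1, hq'mem.2, ?_, ?_, ?_⟩
      · have hclosed : IsClosed
            ((Submodule.span ℝ (Set.range (fun j : Fin n => Φ j)) : Submodule ℝ (Fin d → ℝ)) :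
              Set (Fin d → ℝ)) :=
          Submodule.closed_of_finiteDimensional _
        exact hclosed.mem_of_tendsto hconv2
          (Filter.Eventually.of_forall fun m => (hqS' (φ m)).2.2.1)
      · intro θ hθ
        have hL : Filter.Tendsto
            (fun m => ψ (A (i (φ m))) (b (i (φ m))) (q (φ m)).1 (q (φ m)).2)
            Filter.atTop (nhds (ψ Alim blim q'.1 q'.2)) := by
          simp only [hψg]
          exact (hcontg.tendsto _).comp (hABφ.prodMk_nhds (hconv1.prodMk_nhds hconv2))
        have hR : Filter.Tendsto
            (fun m => ψ (A (i (φ m))) (b (i (φ m))) θ (q (φ m)).2)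
            Filter.atTop (nhds (ψ Alim blim θ q'.2)) := by
          simp only [hψg]
          exact (hcontg.tendsto _).comp
            (hABφ.prodMk_nhds (tendsto_const_nhds.prodMk_nhds hconv2))
        exact le_of_tendsto_of_tendsto' hL hR fun m => (hqS' (φ m)).2.2.2.1 θ hθ
      · intro x hx
        have hL : Filter.Tendsto
            (fun m => ψ (A (i (φ m))) (b (i (φ m))) (q (φ m)).1 x)
            Filter.atTop (nhds (ψ Alim blim q'.1 x)) := by
          simp only [hψg]
          exact (hcontg.tendsto _).comp
            (hABφ.prodMk_nhds (hconv1.prodMk_nhds tendsto_const_nhds))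
        have hR : Filter.Tendsto
            (fun m => ψ (A (i (φ m))) (b (i (φ m))) (q (φ m)).1 (q (φ m)).2)
            Filter.atTop (nhds (ψ Alim blim q'.1 q'.2)) := by
          simp only [hψg]
          exact (hcontg.tendsto _).comp (hABφ.prodMk_nhds (hconv1.prodMk_nhds hconv2))
        exact le_of_tendsto_of_tendsto' hL hR fun m => (hqS' (φ m)).2.2.2.2 x hx
    -- the distances tend to 0, contradiction
    have hr : Filter.Tendsto (fun m => Real.sqrt
        (((q (φ m)).1 - q'.1) ⬝ᵥ ((q (φ m)).1 - q'.1) +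
         ((q (φ m)).2 - q'.2) ⬝ᵥ ((q (φ m)).2 - q'.2))) Filter.atTop (nhds 0) := by
      have hc : Continuous (fun y : (Fin d → ℝ) × (Fin d → ℝ) => Real.sqrt
          ((y.1 - q'.1) ⬝ᵥ (y.1 - q'.1) + (y.2 - q'.2) ⬝ᵥ (y.2 - q'.2))) := by
        apply Real.continuous_sqrt.comp
        apply Continuous.add
        · exact (continuous_fst.sub continuous_const).dotProduct
            (continuous_fst.sub continuous_const)
        · exact (continuous_snd.sub continuous_const).dotProduct
            (continuous_snd.sub continuous_const)
      have := (hc.tendsto q').comp hconv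
      simpa [Function.comp_def] using this
    obtain ⟨m, hm⟩ := (hr.eventually_lt_const hε).exists
    exact absurd hm (not_lt.mpr (hqfar (φ m) q' hq'Sdl))
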